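/- Let γ_s(t) = (a₂t² + a₃t³, s₁t + b₃t³ + b₄t⁴, s₂t + c₃t³ + c₄t⁴) with a₂ ≠ 0, b₃ ≠ 0. For s ≠ 0 small, γ_s is a regular curve at t = 0 (γ_s'(0) = (0, s₁, s₂) ≠ 0), and the numerator of τ_s'κ_s − κ_s'τ_s at t = 0, as a function of (s₁, s₂), has leading term proportional to (4a₂b₄ − 9a₃b₃)s₂ + (9a₃c₃ − 4a₂c₄)s₁; in particular the twisting stratum T in the (s₁,s₂)-plane is, to first order, the line (4a₂b₄ − 9a₃b₃)s₂ + (9a₃c₃ − 4a₂c₄)s₁ = 0. -/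

import Mathlib

noncomputable section
open scoped RealInnerProductSpace
open Filter Asymptotics

/-- ℝ³ as a Euclidean space. -/
abbrev E3 := EuclideanSpace ℝ (Fin 3)

/-- The point (x,y,z) of ℝ³. -/
def mk3 (x y z : ℝ) : E3 := (WithLp.equiv 2 (Fin 3 → ℝ)).symm ![x, y, z]

/-- Cross product on ℝ³. -/
def cross3 (u v : E3) : E3 :=
  mk3 (u 1 * v 2 - u 2 * v 1) (u 2 * v 0 - u 0 * v 2) (u 0 * v 1 - u 1 * v 0)

/-- Determinant of three vectors of ℝ³ (scalar triple product). -/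
def det3 (u v w : E3) : ℝ :=
  u 0 * (v 1 * w 2 - v 2 * w 1) - u 1 * (v 0 * w 2 - v 2 * w 0) +
    u 2 * (v 0 * w 1 - v 1 * w 0)

/-- Curvature of a space curve via the standard (non arc-length) formula. -/
def curvatureF (γ : ℝ → E3) (t : ℝ) : ℝ :=
  ‖cross3 (deriv γ t) (iteratedDeriv 2 γ t)‖ / ‖deriv γ t‖ ^ 3

/-- Torsion of a space curve via the standard (non arc-length) formula. -/
def torsionF (γ : ℝ → E3) (t : ℝ) : ℝ :=
  ⟪cross3 (deriv γ t) (iteratedDeriv 2 γ t), iteratedDeriv 3 γ t⟫ /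
    ‖cross3 (deriv γ t) (iteratedDeriv 2 γ t)‖ ^ 2

/-- The 2-parameter deformation γ_s of the space cusp. -/
def cuspFam (a₂ a₃ b₃ b₄ c₃ c₄ : ℝ) (s : ℝ × ℝ) : ℝ → E3 := fun t =>
  mk3 (a₂ * t ^ 2 + a₃ * t ^ 3) (s.1 * t + b₃ * t ^ 3 + b₄ * t ^ 4)
    (s.2 * t + c₃ * t ^ 3 + c₄ * t ^ 4)

/-- The twisting quantity (κτ' − κ'τ)(0) of the curve γ_s, as a function of s. -/
def twistQ (a₂ a₃ b₃ b₄ c₃ c₄ : ℝ) (s : ℝ × ℝ) : ℝ :=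
  curvatureF (cuspFam a₂ a₃ b₃ b₄ c₃ c₄ s) 0 *
      deriv (torsionF (cuspFam a₂ a₃ b₃ b₄ c₃ c₄ s)) 0 -
    deriv (curvatureF (cuspFam a₂ a₃ b₃ b₄ c₃ c₄ s)) 0 *
      torsionF (cuspFam a₂ a₃ b₃ b₄ c₃ c₄ s) 0

/- ### Auxiliary machinery -/

lemma mk3_apply0 (x y z : ℝ) : mk3 x y z 0 = x := rfl
lemma mk3_apply1 (x y z : ℝ) : mk3 x y z 1 = y := rfl
lemma mk3_apply2 (x y z : ℝ) : mk3 x y z 2 = z := rfl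

lemma inner_mk3 (x y z x' y' z' : ℝ) :
    ⟪mk3 x y z, mk3 x' y' z'⟫ = x*x' + y*y' + z*z' := by
  simp [mk3, PiLp.inner_apply, Fin.sum_univ_three]; ring

lemma norm_mk3 (x y z : ℝ) : ‖mk3 x y z‖ = Real.sqrt (x^2 + y^2 + z^2) := by
  simp [mk3, EuclideanSpace.norm_eq, Fin.sum_univ_three]

lemma mk3_smul (x y z : ℝ) : mk3 x y z = x • mk3 1 0 0 + y • mk3 0 1 0 + z • mk3 0 0 1 := by
  ext i; fin_cases i <;> simp [mk3]

lemma hasDerivAt_mk3 {f g h : ℝ → ℝ} {f' g' h' t : ℝ}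
    (hf : HasDerivAt f f' t) (hg : HasDerivAt g g' t) (hh : HasDerivAt h h' t) :
    HasDerivAt (fun u => mk3 (f u) (g u) (h u)) (mk3 f' g' h') t := by
  rw [show (fun u => mk3 (f u) (g u) (h u))
      = (fun u => f u • mk3 1 0 0 + g u • mk3 0 1 0 + h u • mk3 0 0 1)
      from funext fun u => mk3_smul _ _ _, mk3_smul f' g' h']
  exact ((hf.smul_const _).add (hg.smul_const _)).add (hh.smul_const _)

lemma mk3_congr {x y z x' y' z' : ℝ} (h1 : x = x') (h2 : y = y') (h3 : z = z') :
    mk3 x y z = mk3 x' y' z' := by rw [h1, h2, h3]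

/-- general-point derivative of quartic -/
lemma hasDerivAt_poly4 (f : ℝ → ℝ) (p0 p1 p2 p3 p4 : ℝ)
    (hf : ∀ u, f u = p0 + p1*u + p2*u^2 + p3*u^3 + p4*u^4) (t : ℝ) :
    HasDerivAt f (p1 + 2*p2*t + 3*p3*t^2 + 4*p4*t^3) t := by
  rw [funext hf]
  have h := ((((hasDerivAt_const t p0).add ((hasDerivAt_id t).const_mul p1)).add
      ((hasDerivAt_pow 2 t).const_mul p2)).add
      ((hasDerivAt_pow 3 t).const_mul p3)).add ((hasDerivAt_pow 4 t).const_mul p4)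
  have e : (0 : ℝ) + p1 * 1 + p2 * (↑(2:ℕ) * t ^ (2 - 1)) + p3 * (↑(3:ℕ) * t ^ (3 - 1))
      + p4 * (↑(4:ℕ) * t ^ (4 - 1)) = p1 + 2*p2*t + 3*p3*t^2 + 4*p4*t^3 := by
    push_cast; norm_num; ring
  rw [e] at h
  exact h

/-- derivative at 0 of quartic -/
lemma hasDerivAt_poly4_zero (f : ℝ → ℝ) (p0 p1 p2 p3 p4 : ℝ)
    (hf : ∀ u, f u = p0 + p1*u + p2*u^2 + p3*u^3 + p4*u^4) :
    HasDerivAt f p1 0 := by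
  have h := hasDerivAt_poly4 f p0 p1 p2 p3 p4 hf 0
  have e : p1 + 2*p2*(0:ℝ) + 3*p3*(0:ℝ)^2 + 4*p4*(0:ℝ)^3 = p1 := by ring
  rw [e] at h
  exact h

/- ### The basic derivative functions of the family -/

def G1 (a₂ a₃ b₃ b₄ c₃ c₄ s₁ s₂ : ℝ) (t : ℝ) : E3 :=
  mk3 (2*a₂*t + 3*a₃*t^2) (s₁ + 3*b₃*t^2 + 4*b₄*t^3) (s₂ + 3*c₃*t^2 + 4*c₄*t^3)

def G2 (a₂ a₃ b₃ b₄ c₃ c₄ : ℝ) (t : ℝ) : E3 :=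
  mk3 (2*a₂ + 6*a₃*t) (6*b₃*t + 12*b₄*t^2) (6*c₃*t + 12*c₄*t^2)

def G3 (a₃ b₃ b₄ c₃ c₄ : ℝ) (t : ℝ) : E3 :=
  mk3 (6*a₃) (6*b₃ + 24*b₄*t) (6*c₃ + 24*c₄*t)

lemma hasDerivAt_G0 (a₂ a₃ b₃ b₄ c₃ c₄ s₁ s₂ t : ℝ) :
    HasDerivAt (cuspFam a₂ a₃ b₃ b₄ c₃ c₄ (s₁, s₂)) (G1 a₂ a₃ b₃ b₄ c₃ c₄ s₁ s₂ t) t := by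
  have h := hasDerivAt_mk3
    (hasDerivAt_poly4 (fun u => a₂ * u ^ 2 + a₃ * u ^ 3) 0 0 a₂ a₃ 0 (fun u => by ring) t)
    (hasDerivAt_poly4 (fun u => s₁ * u + b₃ * u ^ 3 + b₄ * u ^ 4) 0 s₁ 0 b₃ b₄ (fun u => by ring) t)
    (hasDerivAt_poly4 (fun u => s₂ * u + c₃ * u ^ 3 + c₄ * u ^ 4) 0 s₂ 0 c₃ c₄ (fun u => by ring) t)
  have e : G1 a₂ a₃ b₃ b₄ c₃ c₄ s₁ s₂ t =
      mk3 (0 + 2*a₂*t + 3*a₃*t^2 + 4*0*t^3) (s₁ + 2*0*t + 3*b₃*t^2 + 4*b₄*t^3)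
        (s₂ + 2*0*t + 3*c₃*t^2 + 4*c₄*t^3) := mk3_congr (by ring) (by ring) (by ring)
  rw [e]
  exact h

lemma hasDerivAt_G1 (a₂ a₃ b₃ b₄ c₃ c₄ s₁ s₂ t : ℝ) :
    HasDerivAt (G1 a₂ a₃ b₃ b₄ c₃ c₄ s₁ s₂) (G2 a₂ a₃ b₃ b₄ c₃ c₄ t) t := by
  have h := hasDerivAt_mk3
    (hasDerivAt_poly4 (fun u => 2*a₂*u + 3*a₃*u^2) 0 (2*a₂) (3*a₃) 0 0 (fun u => by ring) t)
    (hasDerivAt_poly4 (fun u => s₁ + 3*b₃*u^2 + 4*b₄*u^3) s₁ 0 (3*b₃) (4*b₄) 0 (fun u => by ring) t)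
    (hasDerivAt_poly4 (fun u => s₂ + 3*c₃*u^2 + 4*c₄*u^3) s₂ 0 (3*c₃) (4*c₄) 0 (fun u => by ring) t)
  have e : G2 a₂ a₃ b₃ b₄ c₃ c₄ t =
      mk3 (2*a₂ + 2*(3*a₃)*t + 3*0*t^2 + 4*0*t^3)
        (0 + 2*(3*b₃)*t + 3*(4*b₄)*t^2 + 4*0*t^3)
        (0 + 2*(3*c₃)*t + 3*(4*c₄)*t^2 + 4*0*t^3) := mk3_congr (by ring) (by ring) (by ring)
  rw [e]
  exact h

lemma hasDerivAt_G2 (a₂ a₃ b₃ b₄ c₃ c₄ t : ℝ) :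
    HasDerivAt (G2 a₂ a₃ b₃ b₄ c₃ c₄) (G3 a₃ b₃ b₄ c₃ c₄ t) t := by
  have h := hasDerivAt_mk3
    (hasDerivAt_poly4 (fun u => 2*a₂ + 6*a₃*u) (2*a₂) (6*a₃) 0 0 0 (fun u => by ring) t)
    (hasDerivAt_poly4 (fun u => 6*b₃*u + 12*b₄*u^2) 0 (6*b₃) (12*b₄) 0 0 (fun u => by ring) t)
    (hasDerivAt_poly4 (fun u => 6*c₃*u + 12*c₄*u^2) 0 (6*c₃) (12*c₄) 0 0 (fun u => by ring) t)
  have e : G3 a₃ b₃ b₄ c₃ c₄ t =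
      mk3 (6*a₃ + 2*0*t + 3*0*t^2 + 4*0*t^3)
        (6*b₃ + 2*(12*b₄)*t + 3*0*t^2 + 4*0*t^3)
        (6*c₃ + 2*(12*c₄)*t + 3*0*t^2 + 4*0*t^3) := mk3_congr (by ring) (by ring) (by ring)
  rw [e]
  exact h

/- ### Scalar data: cross product components, norms, inner products -/

def C0f (b₃ b₄ c₃ c₄ s₁ s₂ : ℝ) (t : ℝ) : ℝ :=
  (s₁ + 3*b₃*t^2 + 4*b₄*t^3)*(6*c₃*t + 12*c₄*t^2) - (s₂ + 3*c₃*t^2 + 4*c₄*t^3)*(6*b₃*t + 12*b₄*t^2)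

def C1f (a₂ a₃ c₃ c₄ s₂ : ℝ) (t : ℝ) : ℝ :=
  (s₂ + 3*c₃*t^2 + 4*c₄*t^3)*(2*a₂ + 6*a₃*t) - (2*a₂*t + 3*a₃*t^2)*(6*c₃*t + 12*c₄*t^2)

def C2f (a₂ a₃ b₃ b₄ s₁ : ℝ) (t : ℝ) : ℝ :=
  (2*a₂*t + 3*a₃*t^2)*(6*b₃*t + 12*b₄*t^2) - (s₁ + 3*b₃*t^2 + 4*b₄*t^3)*(2*a₂ + 6*a₃*t)

lemma cross_G1_G2 (a₂ a₃ b₃ b₄ c₃ c₄ s₁ s₂ t : ℝ) :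
    cross3 (G1 a₂ a₃ b₃ b₄ c₃ c₄ s₁ s₂ t) (G2 a₂ a₃ b₃ b₄ c₃ c₄ t) =
      mk3 (C0f b₃ b₄ c₃ c₄ s₁ s₂ t) (C1f a₂ a₃ c₃ c₄ s₂ t) (C2f a₂ a₃ b₃ b₄ s₁ t) := rfl

/- cross component derivatives/values at 0 -/
lemma hC0' (b₃ b₄ c₃ c₄ s₁ s₂ : ℝ) :
    HasDerivAt (C0f b₃ b₄ c₃ c₄ s₁ s₂) (6*c₃*s₁ - 6*b₃*s₂) 0 :=
  hasDerivAt_poly4_zero _ 0 (6*c₃*s₁ - 6*b₃*s₂) (12*c₄*s₁ - 12*b₄*s₂) 0 (12*b₃*c₄ - 12*b₄*c₃)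
    (fun u => by simp only [C0f]; ring)

lemma hC1' (a₂ a₃ c₃ c₄ s₂ : ℝ) :
    HasDerivAt (C1f a₂ a₃ c₃ c₄ s₂) (6*a₃*s₂) 0 :=
  hasDerivAt_poly4_zero _ (2*a₂*s₂) (6*a₃*s₂) (-(6*a₂*c₃)) (-(16*a₂*c₄)) (-(12*a₃*c₄))
    (fun u => by simp only [C1f]; ring)

lemma hC2' (a₂ a₃ b₃ b₄ s₁ : ℝ) :
    HasDerivAt (C2f a₂ a₃ b₃ b₄ s₁) (-(6*a₃*s₁)) 0 :=
  hasDerivAt_poly4_zero _ (-(2*a₂*s₁)) (-(6*a₃*s₁)) (6*a₂*b₃) (16*a₂*b₄) (12*a₃*b₄)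
    (fun u => by simp only [C2f]; ring)

lemma C0f_zero (b₃ b₄ c₃ c₄ s₁ s₂ : ℝ) : C0f b₃ b₄ c₃ c₄ s₁ s₂ 0 = 0 := by
  simp only [C0f]; ring
lemma C1f_zero (a₂ a₃ c₃ c₄ s₂ : ℝ) : C1f a₂ a₃ c₃ c₄ s₂ 0 = 2*a₂*s₂ := by
  simp only [C1f]; ring
lemma C2f_zero (a₂ a₃ b₃ b₄ s₁ : ℝ) : C2f a₂ a₃ b₃ b₄ s₁ 0 = -(2*a₂*s₁) := by
  simp only [C2f]; ring

/- A = ‖cross‖², B = ‖γ'‖², P = ⟨cross, γ'''⟩ -/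
def Af (a₂ a₃ b₃ b₄ c₃ c₄ s₁ s₂ : ℝ) (t : ℝ) : ℝ :=
  C0f b₃ b₄ c₃ c₄ s₁ s₂ t ^ 2 + C1f a₂ a₃ c₃ c₄ s₂ t ^ 2 + C2f a₂ a₃ b₃ b₄ s₁ t ^ 2

def Bf (a₂ a₃ b₃ b₄ c₃ c₄ s₁ s₂ : ℝ) (t : ℝ) : ℝ :=
  (2*a₂*t + 3*a₃*t^2)^2 + (s₁ + 3*b₃*t^2 + 4*b₄*t^3)^2 + (s₂ + 3*c₃*t^2 + 4*c₄*t^3)^2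

def Pf (a₂ a₃ b₃ b₄ c₃ c₄ s₁ s₂ : ℝ) (t : ℝ) : ℝ :=
  C0f b₃ b₄ c₃ c₄ s₁ s₂ t * (6*a₃) + C1f a₂ a₃ c₃ c₄ s₂ t * (6*b₃ + 24*b₄*t) +
    C2f a₂ a₃ b₃ b₄ s₁ t * (6*c₃ + 24*c₄*t)

lemma Af_zero (a₂ a₃ b₃ b₄ c₃ c₄ s₁ s₂ : ℝ) :
    Af a₂ a₃ b₃ b₄ c₃ c₄ s₁ s₂ 0 = 4*a₂^2*(s₁^2 + s₂^2) := by
  simp only [Af, C0f_zero, C1f_zero, C2f_zero]; ring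

lemma Bf_zero (a₂ a₃ b₃ b₄ c₃ c₄ s₁ s₂ : ℝ) :
    Bf a₂ a₃ b₃ b₄ c₃ c₄ s₁ s₂ 0 = s₁^2 + s₂^2 := by
  simp only [Bf]; ring

lemma Pf_zero (a₂ a₃ b₃ b₄ c₃ c₄ s₁ s₂ : ℝ) :
    Pf a₂ a₃ b₃ b₄ c₃ c₄ s₁ s₂ 0 = 12*a₂*(b₃*s₂ - c₃*s₁) := by
  simp only [Pf, C0f_zero, C1f_zero, C2f_zero]; ring

lemma hAf' (a₂ a₃ b₃ b₄ c₃ c₄ s₁ s₂ : ℝ) :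
    HasDerivAt (Af a₂ a₃ b₃ b₄ c₃ c₄ s₁ s₂) (24*a₂*a₃*(s₁^2 + s₂^2)) 0 := by
  have h := (((hC0' b₃ b₄ c₃ c₄ s₁ s₂).pow 2).add ((hC1' a₂ a₃ c₃ c₄ s₂).pow 2)).add
    ((hC2' a₂ a₃ b₃ b₄ s₁).pow 2)
  have e : (24*a₂*a₃*(s₁^2 + s₂^2)) =
      ((2:ℕ) : ℝ) * C0f b₃ b₄ c₃ c₄ s₁ s₂ 0 ^ (2-1) * (6*c₃*s₁ - 6*b₃*s₂) +
      ((2:ℕ) : ℝ) * C1f a₂ a₃ c₃ c₄ s₂ 0 ^ (2-1) * (6*a₃*s₂) +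
      ((2:ℕ) : ℝ) * C2f a₂ a₃ b₃ b₄ s₁ 0 ^ (2-1) * (-(6*a₃*s₁)) := by
    rw [C0f_zero, C1f_zero, C2f_zero]; push_cast; ring
  rw [show Af a₂ a₃ b₃ b₄ c₃ c₄ s₁ s₂ = fun t => C0f b₃ b₄ c₃ c₄ s₁ s₂ t ^ 2 +
      C1f a₂ a₃ c₃ c₄ s₂ t ^ 2 + C2f a₂ a₃ b₃ b₄ s₁ t ^ 2 from rfl, e]
  exact h

lemma hBf' (a₂ a₃ b₃ b₄ c₃ c₄ s₁ s₂ : ℝ) :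
    HasDerivAt (Bf a₂ a₃ b₃ b₄ c₃ c₄ s₁ s₂) 0 0 := by
  have h1 : HasDerivAt (fun t : ℝ => 2*a₂*t + 3*a₃*t^2) (2*a₂) 0 :=
    hasDerivAt_poly4_zero (fun t : ℝ => 2*a₂*t + 3*a₃*t^2) 0 (2*a₂) (3*a₃) 0 0 (fun u => by ring)
  have h2 : HasDerivAt (fun t : ℝ => s₁ + 3*b₃*t^2 + 4*b₄*t^3) 0 0 :=
    hasDerivAt_poly4_zero (fun t : ℝ => s₁ + 3*b₃*t^2 + 4*b₄*t^3) s₁ 0 (3*b₃) (4*b₄) 0 (fun u => by ring)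
  have h3 : HasDerivAt (fun t : ℝ => s₂ + 3*c₃*t^2 + 4*c₄*t^3) 0 0 :=
    hasDerivAt_poly4_zero (fun t : ℝ => s₂ + 3*c₃*t^2 + 4*c₄*t^3) s₂ 0 (3*c₃) (4*c₄) 0 (fun u => by ring)
  have h := ((h1.pow 2).add (h2.pow 2)).add (h3.pow 2)
  have e : ((2:ℕ):ℝ) * (2*a₂*(0:ℝ) + 3*a₃*(0:ℝ)^2) ^ (2-1) * (2*a₂) +
      ((2:ℕ):ℝ) * (s₁ + 3*b₃*(0:ℝ)^2 + 4*b₄*(0:ℝ)^3) ^ (2-1) * 0 +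
      ((2:ℕ):ℝ) * (s₂ + 3*c₃*(0:ℝ)^2 + 4*c₄*(0:ℝ)^3) ^ (2-1) * 0 = (0:ℝ) := by
    push_cast; ring
  rw [e] at h
  exact h

lemma hPf' (a₂ a₃ b₃ b₄ c₃ c₄ s₁ s₂ : ℝ) :
    HasDerivAt (Pf a₂ a₃ b₃ b₄ c₃ c₄ s₁ s₂) (48*a₂*(b₄*s₂ - c₄*s₁)) 0 := by
  have l1 : HasDerivAt (fun t : ℝ => 6*b₃ + 24*b₄*t) (24*b₄) 0 :=
    hasDerivAt_poly4_zero (fun t : ℝ => 6*b₃ + 24*b₄*t) (6*b₃) (24*b₄) 0 0 0 (fun u => by ring)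
  have l2 : HasDerivAt (fun t : ℝ => 6*c₃ + 24*c₄*t) (24*c₄) 0 :=
    hasDerivAt_poly4_zero (fun t : ℝ => 6*c₃ + 24*c₄*t) (6*c₃) (24*c₄) 0 0 0 (fun u => by ring)
  have h := (((hC0' b₃ b₄ c₃ c₄ s₁ s₂).mul_const (6*a₃)).add
      ((hC1' a₂ a₃ c₃ c₄ s₂).mul l1)).add ((hC2' a₂ a₃ b₃ b₄ s₁).mul l2)
  have e : (48*a₂*(b₄*s₂ - c₄*s₁)) =
      (6*c₃*s₁ - 6*b₃*s₂) * (6*a₃) +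
      ((6*a₃*s₂) * (6*b₃ + 24*b₄*(0:ℝ)) + C1f a₂ a₃ c₃ c₄ s₂ 0 * (24*b₄)) +
      ((-(6*a₃*s₁)) * (6*c₃ + 24*c₄*(0:ℝ)) + C2f a₂ a₃ b₃ b₄ s₁ 0 * (24*c₄)) := by
    rw [C1f_zero, C2f_zero]; ring
  rw [show Pf a₂ a₃ b₃ b₄ c₃ c₄ s₁ s₂ = fun t => C0f b₃ b₄ c₃ c₄ s₁ s₂ t * (6*a₃) +
      C1f a₂ a₃ c₃ c₄ s₂ t * (6*b₃ + 24*b₄*t) + C2f a₂ a₃ b₃ b₄ s₁ t * (6*c₃ + 24*c₄*t)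
      from rfl, e]
  exact h


/- ### Function-level identities -/

lemma deriv_cusp (a₂ a₃ b₃ b₄ c₃ c₄ s₁ s₂ : ℝ) :
    deriv (cuspFam a₂ a₃ b₃ b₄ c₃ c₄ (s₁, s₂)) = G1 a₂ a₃ b₃ b₄ c₃ c₄ s₁ s₂ :=
  funext fun t => (hasDerivAt_G0 a₂ a₃ b₃ b₄ c₃ c₄ s₁ s₂ t).deriv

lemma iter2_cusp (a₂ a₃ b₃ b₄ c₃ c₄ s₁ s₂ : ℝ) :
    iteratedDeriv 2 (cuspFam a₂ a₃ b₃ b₄ c₃ c₄ (s₁, s₂)) = G2 a₂ a₃ b₃ b₄ c₃ c₄ := by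
  rw [iteratedDeriv_succ, iteratedDeriv_one, deriv_cusp]
  exact funext fun t => (hasDerivAt_G1 a₂ a₃ b₃ b₄ c₃ c₄ s₁ s₂ t).deriv

lemma iter3_cusp (a₂ a₃ b₃ b₄ c₃ c₄ s₁ s₂ : ℝ) :
    iteratedDeriv 3 (cuspFam a₂ a₃ b₃ b₄ c₃ c₄ (s₁, s₂)) = G3 a₃ b₃ b₄ c₃ c₄ := by
  rw [iteratedDeriv_succ, iter2_cusp]
  exact funext fun t => (hasDerivAt_G2 a₂ a₃ b₃ b₄ c₃ c₄ t).deriv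

lemma torsion_eq (a₂ a₃ b₃ b₄ c₃ c₄ s₁ s₂ : ℝ) :
    torsionF (cuspFam a₂ a₃ b₃ b₄ c₃ c₄ (s₁, s₂)) =
      fun t => Pf a₂ a₃ b₃ b₄ c₃ c₄ s₁ s₂ t / Af a₂ a₃ b₃ b₄ c₃ c₄ s₁ s₂ t := by
  funext t
  simp only [torsionF, deriv_cusp, iter2_cusp a₂ a₃ b₃ b₄ c₃ c₄ s₁ s₂,
    iter3_cusp a₂ a₃ b₃ b₄ c₃ c₄ s₁ s₂, cross_G1_G2, G3, inner_mk3, norm_mk3]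
  rw [Real.sq_sqrt (by positivity)]
  rfl

lemma curvature_eq (a₂ a₃ b₃ b₄ c₃ c₄ s₁ s₂ : ℝ) :
    curvatureF (cuspFam a₂ a₃ b₃ b₄ c₃ c₄ (s₁, s₂)) =
      fun t => Real.sqrt (Af a₂ a₃ b₃ b₄ c₃ c₄ s₁ s₂ t) /
        Real.sqrt (Bf a₂ a₃ b₃ b₄ c₃ c₄ s₁ s₂ t) ^ 3 := by
  funext t
  simp only [curvatureF, deriv_cusp, iter2_cusp a₂ a₃ b₃ b₄ c₃ c₄ s₁ s₂]
  rw [cross_G1_G2, norm_mk3]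
  simp only [G1, norm_mk3]
  rfl

/- ### The key exact computation -/

lemma key_identity (a₂ a₃ b₃ b₄ c₃ c₄ s₁ s₂ : ℝ) (ha₂ : a₂ ≠ 0) (hs : s₁^2 + s₂^2 ≠ 0) :
    (s₁^2 + s₂^2)^2 * twistQ a₂ a₃ b₃ b₄ c₃ c₄ (s₁, s₂) =
      (6/|a₂|) * ((4*a₂*b₄ - 9*a₃*b₃)*s₂ + (9*a₃*c₃ - 4*a₂*c₄)*s₁) := by
  have r2pos : 0 < s₁^2 + s₂^2 := lt_of_le_of_ne (by positivity) (Ne.symm hs)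
  have hA0pos : 0 < Af a₂ a₃ b₃ b₄ c₃ c₄ s₁ s₂ 0 := by
    rw [Af_zero]; positivity
  have hB0pos : 0 < Bf a₂ a₃ b₃ b₄ c₃ c₄ s₁ s₂ 0 := by
    rw [Bf_zero]; exact r2pos
  have hsB0pos : 0 < Real.sqrt (Bf a₂ a₃ b₃ b₄ c₃ c₄ s₁ s₂ 0) := Real.sqrt_pos.2 hB0pos
  -- torsion derivative
  have hτ := (hPf' a₂ a₃ b₃ b₄ c₃ c₄ s₁ s₂).div (hAf' a₂ a₃ b₃ b₄ c₃ c₄ s₁ s₂)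
    (ne_of_gt hA0pos)
  have hderivτ := (torsion_eq a₂ a₃ b₃ b₄ c₃ c₄ s₁ s₂) ▸ (show HasDerivAt (fun t => Pf a₂ a₃ b₃ b₄ c₃ c₄ s₁ s₂ t /
      Af a₂ a₃ b₃ b₄ c₃ c₄ s₁ s₂ t) _ 0 from hτ).deriv
  -- curvature derivative
  have hsA : HasDerivAt (fun t => Real.sqrt (Af a₂ a₃ b₃ b₄ c₃ c₄ s₁ s₂ t))
      (1/(2*Real.sqrt (Af a₂ a₃ b₃ b₄ c₃ c₄ s₁ s₂ 0)) * (24*a₂*a₃*(s₁^2 + s₂^2))) 0 :=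
    (Real.hasDerivAt_sqrt (ne_of_gt hA0pos)).comp 0 (hAf' a₂ a₃ b₃ b₄ c₃ c₄ s₁ s₂)
  have hsB : HasDerivAt (fun t => Real.sqrt (Bf a₂ a₃ b₃ b₄ c₃ c₄ s₁ s₂ t))
      (1/(2*Real.sqrt (Bf a₂ a₃ b₃ b₄ c₃ c₄ s₁ s₂ 0)) * 0) 0 :=
    (Real.hasDerivAt_sqrt (ne_of_gt hB0pos)).comp 0 (hBf' a₂ a₃ b₃ b₄ c₃ c₄ s₁ s₂)
  have hκ := hsA.div (hsB.pow 3) (pow_ne_zero 3 (ne_of_gt hsB0pos))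
  have hderivκ := (curvature_eq a₂ a₃ b₃ b₄ c₃ c₄ s₁ s₂) ▸ (show HasDerivAt (fun t => Real.sqrt (Af a₂ a₃ b₃ b₄ c₃ c₄ s₁ s₂ t) /
      Real.sqrt (Bf a₂ a₃ b₃ b₄ c₃ c₄ s₁ s₂ t) ^ 3)
      ((1/(2*Real.sqrt (Af a₂ a₃ b₃ b₄ c₃ c₄ s₁ s₂ 0)) * (24*a₂*a₃*(s₁^2 + s₂^2)) *
          Real.sqrt (Bf a₂ a₃ b₃ b₄ c₃ c₄ s₁ s₂ 0) ^ 3 -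
        Real.sqrt (Af a₂ a₃ b₃ b₄ c₃ c₄ s₁ s₂ 0) *
          (((3:ℕ):ℝ) * Real.sqrt (Bf a₂ a₃ b₃ b₄ c₃ c₄ s₁ s₂ 0) ^ (3 - 1) *
            (1/(2*Real.sqrt (Bf a₂ a₃ b₃ b₄ c₃ c₄ s₁ s₂ 0)) * 0))) /
        (Real.sqrt (Bf a₂ a₃ b₃ b₄ c₃ c₄ s₁ s₂ 0) ^ 3) ^ 2) 0 from hκ).deriv
  have hκ0 : curvatureF (cuspFam a₂ a₃ b₃ b₄ c₃ c₄ (s₁, s₂)) 0 =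
      Real.sqrt (Af a₂ a₃ b₃ b₄ c₃ c₄ s₁ s₂ 0) / Real.sqrt (Bf a₂ a₃ b₃ b₄ c₃ c₄ s₁ s₂ 0) ^ 3 := by
    rw [curvature_eq]
  have hτ0 : torsionF (cuspFam a₂ a₃ b₃ b₄ c₃ c₄ (s₁, s₂)) 0 =
      Pf a₂ a₃ b₃ b₄ c₃ c₄ s₁ s₂ 0 / Af a₂ a₃ b₃ b₄ c₃ c₄ s₁ s₂ 0 := by
    rw [torsion_eq]
  rw [twistQ, hderivτ, hderivκ, hκ0, hτ0, Af_zero, Bf_zero, Pf_zero]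
  -- algebra with square roots
  set R := Real.sqrt (s₁^2 + s₂^2) with hR
  have hRpos : 0 < R := Real.sqrt_pos.2 r2pos
  have hRsq : R^2 = s₁^2 + s₂^2 := Real.sq_sqrt (le_of_lt r2pos)
  have hAq : Real.sqrt (4*a₂^2*(s₁^2 + s₂^2)) = 2 * |a₂| * R := by
    rw [show 4*a₂^2*(s₁^2 + s₂^2) = (2 * |a₂| * R)^2 by
      rw [mul_pow, mul_pow, sq_abs, hRsq]; ring]
    exact Real.sqrt_sq (by positivity)
  rw [hAq, ← hRsq]
  have hRne : R ≠ 0 := ne_of_gt hRpos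
  rcases abs_cases a₂ with ⟨he, _⟩ | ⟨he, _⟩ <;> rw [he] <;> push_cast <;>
    field_simp <;> ring


/-- For s ≠ 0 the curve γ_s is regular at t = 0, and the numerator
(s₁² + s₂²)²·(κτ' − κ'τ)(0) has, as a function of s, leading term proportional to
(4a₂b₄ − 9a₃b₃)s₂ + (9a₃c₃ − 4a₂c₄)s₁: the twisting stratum is to first order this line. -/
theorem twisting_stratum_of_cusp_family
    (a₂ a₃ b₃ b₄ c₃ c₄ : ℝ) (ha₂ : a₂ ≠ 0) (hb₃ : b₃ ≠ 0) :
    (∀ s : ℝ × ℝ, s ≠ 0 →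
      deriv (cuspFam a₂ a₃ b₃ b₄ c₃ c₄ s) 0 = mk3 0 s.1 s.2 ∧ mk3 0 s.1 s.2 ≠ 0) ∧
    ∃ C : ℝ, C ≠ 0 ∧
      (fun s : ℝ × ℝ =>
          (s.1 ^ 2 + s.2 ^ 2) ^ 2 * twistQ a₂ a₃ b₃ b₄ c₃ c₄ s -
            C * ((4 * a₂ * b₄ - 9 * a₃ * b₃) * s.2 + (9 * a₃ * c₃ - 4 * a₂ * c₄) * s.1))
        =o[nhds 0] (fun s : ℝ × ℝ => ‖s‖) := by
  constructor
  · intro s hs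
    constructor
    · have h : deriv (cuspFam a₂ a₃ b₃ b₄ c₃ c₄ (s.1, s.2)) = G1 a₂ a₃ b₃ b₄ c₃ c₄ s.1 s.2 :=
        deriv_cusp a₂ a₃ b₃ b₄ c₃ c₄ s.1 s.2
      rw [Prod.mk.eta] at h
      rw [h]
      simp only [G1]
      exact mk3_congr (by ring) (by ring) (by ring)
    · intro hzero
      apply hs
      have h1 : s.1 = 0 := by
        have := congrArg (fun v : E3 => v 1) hzero
        simpa [mk3_apply1] using this
      have h2 : s.2 = 0 := by
        have := congrArg (fun v : E3 => v 2) hzero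
        simpa [mk3_apply2] using this
      exact Prod.ext h1 h2
  · refine ⟨6 / |a₂|, div_ne_zero (by norm_num) (abs_ne_zero.mpr ha₂), ?_⟩
    have hfun : (fun s : ℝ × ℝ =>
        (s.1 ^ 2 + s.2 ^ 2) ^ 2 * twistQ a₂ a₃ b₃ b₄ c₃ c₄ s -
          (6 / |a₂|) * ((4 * a₂ * b₄ - 9 * a₃ * b₃) * s.2 + (9 * a₃ * c₃ - 4 * a₂ * c₄) * s.1))
        = fun _ : ℝ × ℝ => (0 : ℝ) := by
      funext s
      by_cases h : s = 0
      · subst h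
        simp
      · have hs2 : s.1 ^ 2 + s.2 ^ 2 ≠ 0 := by
          intro hc
          apply h
          have h1 : s.1 = 0 := by nlinarith [sq_nonneg s.1, sq_nonneg s.2]
          have h2 : s.2 = 0 := by nlinarith [sq_nonneg s.1, sq_nonneg s.2]
          exact Prod.ext h1 h2
        have hk := key_identity a₂ a₃ b₃ b₄ c₃ c₄ s.1 s.2 ha₂ hs2
        rw [Prod.mk.eta] at hk
        rw [hk]
        ring
    rw [hfun]
    exact isLittleO_zero _ _
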